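/- Let G be a finite connected graph with set of blocks 𝓑. Every independent blocks inequality (𝓘, α) defines a facet of CBP(G); that is, {x ∈ CBP(G) : ∑_{B∈𝓑} α_B x_B = 1} is a face of CBP(G) of dimension |𝓑| − 1. -/

import Mathlib

open Set

noncomputable section

namespace ConnectedBlocksPaper

variable {V : Type} [Fintype V] [DecidableEq V]

/-- A subgraph is 2-connected: at least 3 vertices and removing any vertex keeps it connected. -/
def IsTwoConnectedSub (G : SimpleGraph V) (H : G.Subgraph) : Prop :=
  3 ≤ H.verts.ncard ∧ ∀ v ∈ H.verts, (H.deleteVerts {v}).Connected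

/-- A block of `G`: a maximal 2-connected subgraph, or a bridge together with its two
incident vertices. -/
def IsBlock (G : SimpleGraph V) (B : G.Subgraph) : Prop :=
  (IsTwoConnectedSub G B ∧ ∀ B' : G.Subgraph, IsTwoConnectedSub G B' → B ≤ B' → B' = B)
  ∨ (∃ (u v : V) (h : G.Adj u v), G.IsBridge s(u, v) ∧ B = G.subgraphOfAdj h)

/-- The set `𝓑` of blocks of `G`, as a type. -/
abbrev Block (G : SimpleGraph V) := {B : G.Subgraph // IsBlock G B}

/-- The subgraph `G[𝓐]` induced by a set of blocks. -/
def blockUnion (G : SimpleGraph V) (𝓐 : Set (Block G)) : G.Subgraph :=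
  ⨆ B ∈ 𝓐, (B : G.Subgraph)

/-- `G[𝓐]` is connected (the empty set of blocks counts as connected). -/
def ConnBlocks (G : SimpleGraph V) (𝓐 : Set (Block G)) : Prop :=
  𝓐 = ∅ ∨ (blockUnion G 𝓐).Connected

/-- The incidence vector `χ^𝓐 ∈ {0,1}^𝓑` of a set of blocks `𝓐 ⊆ 𝓑`. -/
def incVec (G : SimpleGraph V) (𝓐 : Set (Block G)) : Block G → ℝ :=
  Set.indicator 𝓐 1

/-- The connected blocks polytope `CBP(G) ⊆ ℝ^𝓑`. -/
def CBP (G : SimpleGraph V) : Set (Block G → ℝ) :=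
  convexHull ℝ {x | ∃ 𝓐 : Set (Block G), ConnBlocks G 𝓐 ∧ x = incVec G 𝓐}

/-- `F` is a face of the convex set `P`. -/
def IsFaceOf {E : Type*} [AddCommGroup E] [Module ℝ E] (P F : Set E) : Prop :=
  F ⊆ P ∧ Convex ℝ F ∧
    ∀ x ∈ P, ∀ y ∈ P, ∀ t : ℝ, 0 < t → t < 1 →
      t • x + (1 - t) • y ∈ F → x ∈ F ∧ y ∈ F

/-- The dimension of a polytope: the dimension of its affine hull. -/
def polyDim {E : Type*} [AddCommGroup E] [Module ℝ E] (P : Set E) : ℕ :=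
  Module.finrank ℝ (affineSpan ℝ P).direction

/-- A facet is a face of dimension `dim P - 1`. -/
def IsFacetOf {E : Type*} [AddCommGroup E] [Module ℝ E] (P F : Set E) : Prop :=
  IsFaceOf P F ∧ polyDim F = polyDim P - 1

/-- `v` is a cut vertex of `G`: deleting `v` from the connected graph `G` leaves more than
one component. -/
def IsCutVertex (G : SimpleGraph V) (v : V) : Prop :=
  ¬ (G.induce ({v}ᶜ : Set V)).Preconnected

/-- `𝓑⟨𝓐⟩`: the smallest set of blocks inducing a connected subgraph and containing `𝓐`. -/
def blockClosure (G : SimpleGraph V) (𝓐 : Set (Block G)) : Set (Block G) :=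
  ⋂₀ {𝓒 : Set (Block G) | 𝓐 ⊆ 𝓒 ∧ ConnBlocks G 𝓒}

/-- An independent set of blocks: no two blocks share a common vertex. -/
def IndepBlocks (G : SimpleGraph V) (𝓘 : Set (Block G)) : Prop :=
  ∀ B₁ ∈ 𝓘, ∀ B₂ ∈ 𝓘, B₁ ≠ B₂ →
    ((B₁ : G.Subgraph).verts ∩ (B₂ : G.Subgraph).verts) = ∅

/-- `(𝓘, α)` is an independent blocks inequality. -/
def IsIBI (G : SimpleGraph V) (𝓘 : Set (Block G)) (α : Block G → ℤ) : Prop :=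
  IndepBlocks G 𝓘 ∧
  (∀ B, B ∉ blockClosure G 𝓘 → α B = 0) ∧
  (∀ B ∈ 𝓘, α B = 1) ∧
  (∀ B ∈ blockClosure G 𝓘 \ 𝓘, α B ≤ 0) ∧
  (∑ᶠ B ∈ blockClosure G 𝓘 \ 𝓘, α B = -((𝓘.ncard : ℤ) - 1)) ∧
  (∀ I ⊆ 𝓘, ∑ᶠ B ∈ blockClosure G I \ 𝓘, α B ≤ -((I.ncard : ℤ) - 1))

/-- `𝓑[H]`: the set of blocks (of `G`) of the subgraph `H`. -/
def blocksOf (G : SimpleGraph V) (H : G.Subgraph) : Set (Block G) :=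
  {B : Block G | (B : G.Subgraph) ≤ H}

/-- `𝒦_v`: the components of `G - v` with `v` (and its incident edges) added back. -/
def Kv (G : SimpleGraph V) (v : V) : Set G.Subgraph :=
  {H | ∃ C : (G.induce ({v}ᶜ : Set V)).ConnectedComponent,
        H = (⊤ : G.Subgraph).induce (Subtype.val '' C.supp ∪ {v})}

/-- A polytope is simple if every vertex lies in exactly `dim P` facets. -/
def IsSimplePolytope {E : Type*} [AddCommGroup E] [Module ℝ E] (P : Set E) : Prop :=
  ∀ x ∈ P.extremePoints ℝ, {F : Set E | IsFacetOf P F ∧ x ∈ F}.ncard = polyDim P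

/-- A simplex: the convex hull of an affinely independent finite set. -/
def IsSimplex {E : Type*} [AddCommGroup E] [Module ℝ E] (F : Set E) : Prop :=
  ∃ s : Finset E, AffineIndependent ℝ ((↑) : s → E) ∧ F = convexHull ℝ (s : Set E)

/-- A polytope is simplicial if every facet is a simplex. -/
def IsSimplicialPolytope {E : Type*} [AddCommGroup E] [Module ℝ E] (P : Set E) : Prop :=
  ∀ F : Set E, IsFacetOf P F → IsSimplex F

/-- The graph of a polytope: extreme points, adjacent when they span a 1-dimensional face. -/
def polyGraph {E : Type*} [AddCommGroup E] [Module ℝ E] (P : Set E) : SimpleGraph E where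
  Adj x y := x ≠ y ∧ x ∈ P.extremePoints ℝ ∧ y ∈ P.extremePoints ℝ ∧
    IsFaceOf P (segment ℝ x y) ∧ polyDim (segment ℝ x y) = 1
  symm := by
    constructor
    rintro x y ⟨hxy, hx, hy, hF, hd⟩
    exact ⟨hxy.symm, hy, hx, by rwa [segment_symm], by rwa [segment_symm]⟩
  loopless := by constructor; rintro x ⟨h, -⟩; exact h rfl

/-! ### Auxiliary developments for `ibi_facet` -/

section Aux

open SimpleGraph

instance finite_subgraph (G : SimpleGraph V) : Finite G.Subgraph :=
  Finite.of_injective (fun H => (H.verts, H.Adj))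
    (fun H₁ H₂ hh => SimpleGraph.Subgraph.ext (congrArg Prod.fst hh) (congrArg Prod.snd hh))

/-! #### Abstract connectivity on a finite "block graph" -/

section Abstract

variable {β : Type} (adj : β → β → Prop)

/-- Reflexive-transitive closure of adjacency within a finite set. -/
def BRel (S : Finset β) (B B' : β) : Prop :=
  Relation.ReflTransGen (fun X Y => X ∈ S ∧ Y ∈ S ∧ adj X Y) B B'

/-- A finite set is abstractly connected. -/
def BConn (S : Finset β) : Prop :=
  S.Nonempty ∧ ∀ B ∈ S, ∀ B' ∈ S, BRel adj S B B'

variable {adj}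

lemma BRel.symm {S : Finset β} {B B' : β} (hadj : Symmetric adj) (h : BRel adj S B B') :
    BRel adj S B' B :=
  (@Relation.ReflTransGen.symmetric _ _ ⟨fun _ _ hx => ⟨hx.2.1, hx.1, hadj hx.2.2⟩⟩).symm _ _ h

/-- The key extraction step: from any tight connected set meeting `R` we can produce a
tight connected set meeting `R` in exactly one element. -/
lemma core_step [DecidableEq β] (hadj : Symmetric adj) (w : β → ℤ)
    (hvalid : ∀ S : Finset β, BConn adj S → ∑ B ∈ S, w B ≤ 1) :
    ∀ (n : ℕ) (T R : Finset β), BConn adj T → ∑ B ∈ T, w B = 1 → (T ∩ R).Nonempty →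
      (T ∩ R).card ≤ n →
      ∃ v ∈ R, ∃ T' : Finset β, BConn adj T' ∧ ∑ B ∈ T', w B = 1 ∧ T' ∩ R = {v} := by
  intro n
  induction n with
  | zero =>
    intro T R _ _ hne hcard
    rw [Nat.le_zero, Finset.card_eq_zero] at hcard
    rw [hcard] at hne
    exact absurd hne (by simp)
  | succ n IH =>
    classical
    intro T R hconn htight hne hcard
    obtain ⟨r, hr⟩ := hne
    have hrT : r ∈ T := (Finset.mem_inter.mp hr).1
    have hrR : r ∈ R := (Finset.mem_inter.mp hr).2
    by_cases hsing : T ∩ R = {r}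
    · exact ⟨r, hrR, T, hconn, htight, hsing⟩
    set A : Finset β := (T ∩ R).erase r with hA
    set D : Finset β := T.erase r with hD
    have hDsub : D ⊆ T := Finset.erase_subset _ _
    have hrD : r ∉ D := Finset.notMem_erase _ _
    set good : Finset β := D.filter (fun B => ¬ ∃ a ∈ A, BRel adj D B a) with hgood
    set bad : Finset β := D.filter (fun B => ∃ a ∈ A, BRel adj D B a) with hbad
    have hDsum : ∑ B ∈ good, w B + ∑ B ∈ bad, w B = ∑ B ∈ D, w B := by
      rw [add_comm]
      exact Finset.sum_filter_add_sum_filter_not D _ w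
    have hTsum : w r + ∑ B ∈ D, w B = 1 := by
      rw [← htight]
      rw [← Finset.sum_insert hrD, hD, Finset.insert_erase hrT]
    have hgoodD : good ⊆ D := Finset.filter_subset _ _
    have hbadD : bad ⊆ D := Finset.filter_subset _ _
    by_cases hbadle : ∑ B ∈ bad, w B ≤ 0
    · -- good part together with `r` is tight and meets `R` only in `r`
      set T' : Finset β := insert r good with hT'
      have hrT' : r ∈ T' := Finset.mem_insert_self _ _
      have hT'T : T' ⊆ T := by
        intro x hx
        rcases Finset.mem_insert.mp hx with rfl | hx
        · exact hrT
        · exact hDsub (hgoodD hx)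
      have key : ∀ X, BRel adj T X r → X ∈ T' → BRel adj T' X r := by
        intro X hX
        induction hX using Relation.ReflTransGen.head_induction_on with
        | refl => intro _; exact Relation.ReflTransGen.refl
        | @head X Y hstep hrel ih =>
          intro hX'
          rcases Finset.mem_insert.mp hX' with rfl | hXgood
          · exact Relation.ReflTransGen.refl
          · obtain ⟨hXT, hYT, hadjXY⟩ := hstep
            by_cases hYr : Y = r
            · subst hYr
              exact Relation.ReflTransGen.single ⟨hX', hrT', hadjXY⟩
            · have hYD : Y ∈ D := Finset.mem_erase.mpr ⟨hYr, hYT⟩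
              have hXD : X ∈ D := hgoodD hXgood
              have hYgood : Y ∈ good := by
                rw [hgood, Finset.mem_filter]
                refine ⟨hYD, fun hbadY => ?_⟩
                obtain ⟨a, haA, hrel'⟩ := hbadY
                have hXbad : ∃ a ∈ A, BRel adj D X a :=
                  ⟨a, haA, Relation.ReflTransGen.head ⟨hXD, hYD, hadjXY⟩ hrel'⟩
                exact (Finset.mem_filter.mp hXgood).2 hXbad
              have hYT' : Y ∈ T' := Finset.mem_insert_of_mem hYgood
              exact Relation.ReflTransGen.head ⟨hX', hYT', hadjXY⟩ (ih hYT')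
      have hconnT' : BConn adj T' := by
        refine ⟨⟨r, hrT'⟩, fun B hB B' hB' => ?_⟩
        have h1 : BRel adj T' B r := key B (hconn.2 B (hT'T hB) r hrT) hB
        have h2 : BRel adj T' B' r := key B' (hconn.2 B' (hT'T hB') r hrT) hB'
        exact h1.trans (h2.symm hadj)
      have hrgood : r ∉ good := fun hc => hrD (hgoodD hc)
      have hT'sum : ∑ B ∈ T', w B = w r + ∑ B ∈ good, w B := Finset.sum_insert hrgood
      have hT'tight : ∑ B ∈ T', w B = 1 := by
        have hle := hvalid T' hconnT'
        omega
      have hT'R : T' ∩ R = {r} := by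
        apply Finset.eq_singleton_iff_unique_mem.mpr
        refine ⟨Finset.mem_inter.mpr ⟨hrT', hrR⟩, fun x hx => ?_⟩
        obtain ⟨hxT', hxR⟩ := Finset.mem_inter.mp hx
        rcases Finset.mem_insert.mp hxT' with rfl | hxgood
        · rfl
        · exfalso
          have hxD : x ∈ D := hgoodD hxgood
          have hxA : x ∈ A := Finset.mem_erase.mpr
            ⟨(Finset.mem_erase.mp hxD).1, Finset.mem_inter.mpr ⟨hDsub hxD, hxR⟩⟩
          exact (Finset.mem_filter.mp hxgood).2 ⟨x, hxA, Relation.ReflTransGen.refl⟩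
      exact ⟨r, hrR, T', hconnT', hT'tight, hT'R⟩
    · -- some piece of the bad part is tight; recurse
      push_neg at hbadle
      set piece : β → Finset β := fun a => D.filter (fun B => BRel adj D B a) with hpiece
      have hpieceD : ∀ a, piece a ⊆ D := fun a => Finset.filter_subset _ _
      have hbadeq : bad = (A.image piece).biUnion id := by
        ext B
        simp only [hbad, Finset.mem_filter, Finset.mem_biUnion, Finset.mem_image, id]
        constructor
        · rintro ⟨hBD, a, haA, hrel⟩
          exact ⟨piece a, ⟨a, haA, rfl⟩, Finset.mem_filter.mpr ⟨hBD, hrel⟩⟩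
        · rintro ⟨P, ⟨a, haA, rfl⟩, hBP⟩
          obtain ⟨hBD, hrel⟩ := Finset.mem_filter.mp hBP
          exact ⟨hBD, a, haA, hrel⟩
      have hdisj : Set.PairwiseDisjoint ↑(A.image piece) (id : Finset β → Finset β) := by
        intro P hP Q hQ hPQ
        simp only [Finset.coe_image, Set.mem_image, Finset.mem_coe] at hP hQ
        obtain ⟨a, haA, rfl⟩ := hP
        obtain ⟨a', ha'A, rfl⟩ := hQ
        refine Finset.disjoint_left.mpr fun B hB hB' => hPQ ?_
        obtain ⟨hBD, hBa⟩ := Finset.mem_filter.mp hB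
        obtain ⟨-, hBa'⟩ := Finset.mem_filter.mp hB'
        have haa' : ∀ X, BRel adj D X a ↔ BRel adj D X a' := fun X =>
          ⟨fun hX => hX.trans ((hBa.symm hadj).trans hBa'),
           fun hX => hX.trans ((hBa'.symm hadj).trans hBa)⟩
        show piece a = piece a'
        ext Y
        simp only [hpiece, Finset.mem_filter]
        rw [haa' Y]
      have hbadsum : ∑ B ∈ bad, w B = ∑ P ∈ A.image piece, ∑ B ∈ P, w B := by
        rw [hbadeq, Finset.sum_biUnion hdisj]
        rfl
      have hex : ∃ a ∈ A, 1 ≤ ∑ B ∈ piece a, w B := by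
        by_contra hno
        push_neg at hno
        have hall : ∑ P ∈ A.image piece, ∑ B ∈ P, w B ≤ 0 := by
          apply Finset.sum_nonpos
          intro P hP
          obtain ⟨a, haA, rfl⟩ := Finset.mem_image.mp hP
          have := hno a haA
          omega
        omega
      obtain ⟨a, haA, hge⟩ := hex
      have haTR : a ∈ T ∩ R := Finset.mem_of_mem_erase haA
      have haD : a ∈ D :=
        Finset.mem_erase.mpr ⟨(Finset.mem_erase.mp haA).1, (Finset.mem_inter.mp haTR).1⟩
      have hapiece : a ∈ piece a := Finset.mem_filter.mpr ⟨haD, Relation.ReflTransGen.refl⟩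
      have keyp : ∀ X, BRel adj D X a → X ∈ piece a → BRel adj (piece a) X a := by
        intro X hX
        induction hX using Relation.ReflTransGen.head_induction_on with
        | refl => intro _; exact Relation.ReflTransGen.refl
        | @head X Y hstep hrel ih =>
          intro hXp
          have hYp : Y ∈ piece a := Finset.mem_filter.mpr ⟨hstep.2.1, hrel⟩
          exact Relation.ReflTransGen.head ⟨hXp, hYp, hstep.2.2⟩ (ih hYp)
      have hconnp : BConn adj (piece a) := by
        refine ⟨⟨a, hapiece⟩, fun B hB B' hB' => ?_⟩
        have h1 := keyp B (Finset.mem_filter.mp hB).2 hB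
        have h2 := keyp B' (Finset.mem_filter.mp hB').2 hB'
        exact h1.trans (h2.symm hadj)
      have htightp : ∑ B ∈ piece a, w B = 1 := le_antisymm (hvalid _ hconnp) hge
      have hsubA : piece a ∩ R ⊆ A := by
        intro x hx
        obtain ⟨hxp, hxR⟩ := Finset.mem_inter.mp hx
        have hxD := hpieceD a hxp
        exact Finset.mem_erase.mpr
          ⟨(Finset.mem_erase.mp hxD).1, Finset.mem_inter.mpr ⟨hDsub hxD, hxR⟩⟩
      have hpRne : (piece a ∩ R).Nonempty :=
        ⟨a, Finset.mem_inter.mpr ⟨hapiece, (Finset.mem_inter.mp haTR).2⟩⟩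
      have hcard' : (piece a ∩ R).card ≤ n := by
        have h1 : (piece a ∩ R).card ≤ A.card := Finset.card_le_card hsubA
        have h2 : A.card = (T ∩ R).card - 1 := Finset.card_erase_of_mem hr
        have h3 : 0 < (T ∩ R).card := Finset.card_pos.mpr ⟨r, hr⟩
        omega
      exact IH (piece a) R hconnp htightp hpRne hcard'

/-- A triangular family of tight connected sets covering `R`. -/
lemma fam [DecidableEq β] [Fintype β] (hadj : Symmetric adj) (w : β → ℤ)
    (hvalid : ∀ S : Finset β, BConn adj S → ∑ B ∈ S, w B ≤ 1)
    (htopc : BConn adj (Finset.univ : Finset β)) (htopt : ∑ B, w B = 1) :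
    ∀ (n : ℕ) (R : Finset β), R.card ≤ n → ∃ L : List (β × Finset β),
      (L.map Prod.fst).Nodup ∧ (L.map Prod.fst).toFinset = R ∧
      (∀ p ∈ L, BConn adj p.2 ∧ (∑ B ∈ p.2, w B) = 1 ∧ p.1 ∈ p.2) ∧
      List.Pairwise (fun p q => q.1 ∉ p.2) L := by
  intro n
  induction n with
  | zero =>
    intro R hR
    rw [Nat.le_zero, Finset.card_eq_zero] at hR
    subst hR
    exact ⟨[], by simp, by simp, by simp, by simp⟩
  | succ n IH =>
    intro R hR
    rcases Finset.eq_empty_or_nonempty R with rfl | hRne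
    · exact ⟨[], by simp, by simp, by simp, by simp⟩
    · have hne : (Finset.univ ∩ R).Nonempty := by rwa [Finset.univ_inter]
      obtain ⟨v, hvR, T', hconn', htight', hint'⟩ :=
        core_step hadj w hvalid (Finset.univ ∩ R).card Finset.univ R htopc htopt hne le_rfl
      have hcard' : (R.erase v).card ≤ n := by
        have := Finset.card_erase_of_mem hvR
        have h3 : 0 < R.card := Finset.card_pos.mpr hRne
        omega
      obtain ⟨L', hnd', htf', hall', hpw'⟩ := IH (R.erase v) hcard'
      have hvT' : v ∈ T' := by
        have : v ∈ T' ∩ R := by rw [hint']; exact Finset.mem_singleton_self v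
        exact (Finset.mem_inter.mp this).1
      refine ⟨(v, T') :: L', ?_, ?_, ?_, ?_⟩
      · simp only [List.map_cons, List.nodup_cons]
        refine ⟨fun hmem => ?_, hnd'⟩
        rw [← List.mem_toFinset, htf'] at hmem
        exact (Finset.notMem_erase v R) hmem
      · simp only [List.map_cons, List.toFinset_cons, htf']
        exact Finset.insert_erase hvR
      · intro p hp
        rcases List.mem_cons.mp hp with rfl | hp
        · exact ⟨hconn', htight', hvT'⟩
        · exact hall' p hp
      · refine List.Pairwise.cons ?_ hpw'
        intro q hq hqT'
        have hq1 : q.1 ∈ R.erase v := by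
          rw [← htf']
          exact List.mem_toFinset.mpr (List.mem_map_of_mem (f := Prod.fst) hq)
        have hqTR : q.1 ∈ T' ∩ R :=
          Finset.mem_inter.mpr ⟨hqT', Finset.mem_of_mem_erase hq1⟩
        rw [hint', Finset.mem_singleton] at hqTR
        exact (Finset.mem_erase.mp hq1).1 hqTR

/-- Triangular 0/1-vectors are linearly independent. -/
lemma triangular_linearIndependent [Fintype β]
    (L : List (β × Finset β)) (hmem : ∀ p ∈ L, p.1 ∈ p.2)
    (hpw : List.Pairwise (fun p q => q.1 ∉ p.2) L) :
    LinearIndependent ℝ (fun i : Fin L.length =>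
      (Set.indicator ↑((L.get i).2) (1 : β → ℝ))) := by
  classical
  rw [Fintype.linearIndependent_iff]
  intro g hg
  by_contra hval
  push_neg at hval
  obtain ⟨i₀, hi₀⟩ := hval
  set s : Finset (Fin L.length) := Finset.univ.filter (fun i => g i ≠ 0) with hs
  have hsne : s.Nonempty := ⟨i₀, by simp [hs, hi₀]⟩
  set m := s.max' hsne with hm
  have hmmem : m ∈ s := s.max'_mem hsne
  have hgm : g m ≠ 0 := by
    have := (Finset.mem_filter.mp hmmem).2
    simpa using this
  have heval := congrFun hg ((L.get m).1)
  rw [Finset.sum_apply] at heval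
  have hterm : ∀ i ∈ Finset.univ, i ≠ m →
      (g i • Set.indicator (↑(L.get i).2) (1 : β → ℝ)) ((L.get m).1) = 0 := by
    intro i _ him
    rcases lt_or_gt_of_ne him with hlt | hgt
    · have hnm : (L.get m).1 ∉ ((L.get i).2 : Set β) := by
        have := (List.pairwise_iff_get.mp hpw) i m hlt
        simpa using this
      rw [Pi.smul_apply, Set.indicator_of_notMem hnm, smul_zero]
    · have hgi : g i = 0 := by
        by_contra hgi
        have hi : i ∈ s := by simp [hs, hgi]
        have := s.le_max' i hi
        rw [← hm] at this
        exact absurd (lt_of_lt_of_le hgt this) (lt_irrefl m)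
      rw [Pi.smul_apply, hgi, zero_smul]
  rw [Finset.sum_eq_single m hterm (fun hc => absurd (Finset.mem_univ m) hc)] at heval
  have hone : (Set.indicator (↑(L.get m).2) (1 : β → ℝ)) ((L.get m).1) = 1 := by
    rw [Set.indicator_of_mem (by exact_mod_cast hmem (L.get m) (L.get_mem m))]
    rfl
  rw [Pi.smul_apply, hone, smul_eq_mul, mul_one] at heval
  exact hgm heval

end Abstract

/-! #### Graph-theoretic facts about blocks -/

section Graph

open SimpleGraph

variable {G : SimpleGraph V}

/-- The "block graph": two blocks are adjacent when they share a vertex. -/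
def badj (G : SimpleGraph V) (B₁ B₂ : Block G) : Prop :=
  ((B₁ : G.Subgraph).verts ∩ (B₂ : G.Subgraph).verts).Nonempty

lemma badj_symm (G : SimpleGraph V) : Symmetric (badj G) := fun B₁ B₂ hb => by
  rwa [badj, Set.inter_comm] at hb

lemma IsTwoConnectedSub.connected {H : G.Subgraph} (h2 : IsTwoConnectedSub G H) :
    H.Connected := by
  obtain ⟨hcard, hdel⟩ := h2
  have hne : H.verts.Nonempty := Set.nonempty_of_ncard_ne_zero (by omega)
  rw [SimpleGraph.Subgraph.connected_iff]
  refine ⟨?_, hne⟩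
  rw [SimpleGraph.Subgraph.preconnected_iff]
  intro u x
  by_cases hux : (u : V) = (x : V)
  · have : u = x := Subtype.ext hux
    rw [this]
  · have hthird : ∃ v ∈ H.verts, v ≠ (u : V) ∧ v ≠ (x : V) := by
      by_contra hno
      push_neg at hno
      have hsub : H.verts ⊆ {(u : V), (x : V)} := by
        intro y hy
        by_cases hyu : y = (u : V)
        · exact Or.inl hyu
        · exact Or.inr (hno y hy hyu)
      have hle2 : H.verts.ncard ≤ 2 := by
        have h1 := Set.ncard_le_ncard hsub (Set.toFinite _)
        have h2 : ({(u : V), (x : V)} : Set V).ncard ≤ 2 := by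
          refine le_trans (Set.ncard_insert_le _ _) ?_
          simp [Set.ncard_singleton]
        omega
      omega
    obtain ⟨v, hv, hvu, hvx⟩ := hthird
    have hc := hdel v hv
    have hu' : (u : V) ∈ (H.deleteVerts {v}).verts := by
      rw [SimpleGraph.Subgraph.deleteVerts_verts]
      exact ⟨u.2, by simp only [Set.mem_singleton_iff]; exact fun hh => hvu hh.symm⟩
    have hx' : (x : V) ∈ (H.deleteVerts {v}).verts := by
      rw [SimpleGraph.Subgraph.deleteVerts_verts]
      exact ⟨x.2, by simp only [Set.mem_singleton_iff]; exact fun hh => hvx hh.symm⟩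
    have hreach := (SimpleGraph.Subgraph.connected_iff.mp hc).1 ⟨(u : V), hu'⟩ ⟨(x : V), hx'⟩
    have := hreach.map (SimpleGraph.Subgraph.inclusion (SimpleGraph.Subgraph.deleteVerts_le))
    exact this

lemma block_connected (B : Block G) : (B : G.Subgraph).Connected := by
  obtain ⟨H, hbl⟩ := B
  rcases hbl with ⟨h2, -⟩ | ⟨u, v, hu, -, rfl⟩
  · exact h2.connected
  · exact SimpleGraph.Subgraph.subgraphOfAdj_connected hu

lemma block_verts_nonempty (B : Block G) : (B : G.Subgraph).verts.Nonempty :=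
  (SimpleGraph.Subgraph.connected_iff.mp (block_connected B)).2

lemma cycle_del_connected {x : V} (c : G.Walk x x) (hc : c.IsCycle) :
    ((c.toSubgraph).deleteVerts {x}).Connected := by
  cases c with
  | nil => exact absurd rfl hc.ne_nil
  | @cons _ y _ hxy q =>
    have hcyc := (SimpleGraph.Walk.cons_isCycle_iff q hxy).mp hc
    have hxyne : x ≠ y := hxy.ne
    obtain ⟨z, h₂, W, hW⟩ := SimpleGraph.Walk.exists_eq_cons_of_ne hxyne q.reverse
    have hqr : q.reverse.IsPath := hcyc.1.reverse
    rw [hW, SimpleGraph.Walk.cons_isPath_iff] at hqr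
    obtain ⟨hWpath, hxW⟩ := hqr
    have hsup : ∀ w : V, w ∈ (SimpleGraph.Walk.cons hxy q).support ↔ w = x ∨ w ∈ W.support := by
      intro w
      rw [SimpleGraph.Walk.support_cons, List.mem_cons]
      constructor
      · rintro (rfl | hw)
        · exact Or.inl rfl
        · have hw' : w ∈ q.reverse.support := by
            rwa [SimpleGraph.Walk.support_reverse, List.mem_reverse]
          rw [hW, SimpleGraph.Walk.support_cons, List.mem_cons] at hw'
          exact hw'
      · rintro (rfl | hw)
        · exact Or.inl rfl
        · right
          have hw' : w ∈ q.reverse.support := by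
            rw [hW, SimpleGraph.Walk.support_cons]
            exact List.mem_cons_of_mem _ hw
          rwa [SimpleGraph.Walk.support_reverse, List.mem_reverse] at hw'
    have hverts : ((SimpleGraph.Walk.cons hxy q).toSubgraph.deleteVerts {x}).verts
        = W.toSubgraph.verts := by
      rw [SimpleGraph.Subgraph.deleteVerts_verts, SimpleGraph.Walk.verts_toSubgraph,
        SimpleGraph.Walk.verts_toSubgraph]
      ext w
      simp only [Set.mem_diff, Set.mem_setOf_eq, Set.mem_singleton_iff]
      constructor
      · rintro ⟨hw, hwx⟩
        rcases (hsup w).mp hw with rfl | h'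
        · exact absurd rfl hwx
        · exact h'
      · intro hw
        refine ⟨(hsup w).mpr (Or.inr hw), ?_⟩
        rintro rfl
        exact hxW hw
    have hle2 : W.toSubgraph ≤ (SimpleGraph.Walk.cons hxy q).toSubgraph := by
      calc W.toSubgraph ≤ (SimpleGraph.Walk.cons h₂ W).toSubgraph := by
            simp only [SimpleGraph.Walk.toSubgraph]
            exact le_sup_right
        _ = q.reverse.toSubgraph := by rw [hW]
        _ = q.toSubgraph := SimpleGraph.Walk.toSubgraph_reverse q
        _ ≤ (SimpleGraph.Walk.cons hxy q).toSubgraph := by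
            simp only [SimpleGraph.Walk.toSubgraph]
            exact le_sup_right
    have hle3 : W.toSubgraph ≤ (SimpleGraph.Walk.cons hxy q).toSubgraph.deleteVerts {x} := by
      constructor
      · exact hverts.symm.subset
      · intro a b hab
        have haW : a ∈ W.toSubgraph.verts := hab.fst_mem
        have hbW : b ∈ W.toSubgraph.verts := hab.snd_mem
        have hax : a ≠ x := by
          rintro rfl
          exact hxW ((SimpleGraph.Walk.mem_verts_toSubgraph W).mp haW)
        have hbx : b ≠ x := by
          rintro rfl
          exact hxW ((SimpleGraph.Walk.mem_verts_toSubgraph W).mp hbW)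
        simp only [SimpleGraph.Subgraph.deleteVerts_adj, Set.mem_singleton_iff]
        exact ⟨(hle2.1 haW : _), hax, (hle2.1 hbW : _), hbx, hle2.2 hab⟩
    exact SimpleGraph.Subgraph.Connected.mono hle3 hverts.symm (W.toSubgraph_connected)

lemma cycle_ncard {x : V} (c : G.Walk x x) (hc : c.IsCycle) :
    3 ≤ c.toSubgraph.verts.ncard := by
  cases c with
  | nil => exact absurd rfl hc.ne_nil
  | @cons _ y _ hxy q =>
    have hnd : q.support.Nodup := by
      have := hc.support_nodup
      rwa [SimpleGraph.Walk.support_cons, List.tail_cons] at this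
    have hlen : 3 ≤ q.length + 1 := by
      have := hc.three_le_length
      rwa [SimpleGraph.Walk.length_cons] at this
    have hset : (SimpleGraph.Walk.cons hxy q).toSubgraph.verts = ↑q.support.toFinset := by
      rw [SimpleGraph.Walk.verts_toSubgraph]
      ext w
      simp only [Set.mem_setOf_eq, List.coe_toFinset, SimpleGraph.Walk.support_cons,
        List.mem_cons]
      constructor
      · rintro (rfl | hw)
        · exact q.end_mem_support
        · exact hw
      · exact Or.inr
    rw [hset, Set.ncard_coe_finset, List.toFinset_card_of_nodup hnd,
      SimpleGraph.Walk.length_support]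
    exact hlen

lemma exists_block_edge {u v : V} (hu : G.Adj u v) :
    ∃ B : Block G, (B : G.Subgraph).Adj u v := by
  classical
  by_cases hb : G.IsBridge s(u, v)
  · exact ⟨⟨G.subgraphOfAdj hu, Or.inr ⟨u, v, hu, hb, rfl⟩⟩, by simp⟩
  · have hreach : (G.deleteEdges {s(u, v)}).Reachable u v := by
      rw [SimpleGraph.isBridge_iff] at hb
      push_neg at hb
      exact hb
    rw [SimpleGraph.reachable_deleteEdges_iff_exists_walk] at hreach
    obtain ⟨p₀, hp₀⟩ := hreach
    have hPpath : p₀.bypass.IsPath := SimpleGraph.Walk.bypass_isPath p₀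
    have hPe : s(u, v) ∉ p₀.bypass.edges := fun hx => hp₀ (SimpleGraph.Walk.edges_bypass_subset p₀ hx)
    set C : G.Walk u u := SimpleGraph.Walk.cons hu p₀.bypass.reverse with hC
    have hCcyc : C.IsCycle := by
      rw [hC, SimpleGraph.Walk.cons_isCycle_iff]
      refine ⟨hPpath.reverse, fun hmem => hPe ?_⟩
      rwa [SimpleGraph.Walk.edges_reverse, List.mem_reverse] at hmem
    have h2 : IsTwoConnectedSub G C.toSubgraph := by
      refine ⟨cycle_ncard C hCcyc, fun x hx => ?_⟩
      have hx' : x ∈ C.support := (SimpleGraph.Walk.mem_verts_toSubgraph C).mp hx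
      have := cycle_del_connected (C.rotate x hx') (hCcyc.rotate hx')
      rwa [SimpleGraph.Walk.toSubgraph_rotate] at this
    obtain ⟨M, hM, hmax⟩ := Set.Finite.exists_maximalFor id
      {B' : G.Subgraph | IsTwoConnectedSub G B' ∧ C.toSubgraph ≤ B'} (Set.toFinite _)
      ⟨C.toSubgraph, h2, le_refl _⟩
    refine ⟨⟨M, Or.inl ⟨hM.1, fun B' h2' hle => ?_⟩⟩, ?_⟩
    · exact le_antisymm (hmax ⟨h2', hM.2.trans hle⟩ hle) hle
    · apply hM.2.2
      show C.toSubgraph.Adj u v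
      rw [hC]
      simp [SimpleGraph.Walk.toSubgraph]

lemma brel_univ_aux [Fintype (Block G)] : ∀ {a b : V} (p : G.Walk a b) (B B' : Block G),
    a ∈ (B : G.Subgraph).verts → b ∈ (B' : G.Subgraph).verts →
    BRel (badj G) Finset.univ B B' := by
  intro a b p
  induction p with
  | nil =>
    intro B B' ha hb
    exact Relation.ReflTransGen.single
      ⟨Finset.mem_univ _, Finset.mem_univ _, ⟨_, ha, hb⟩⟩
  | @cons a' c' b' h' q IH =>
    intro B B' ha hb
    obtain ⟨Be, hBe⟩ := exists_block_edge h'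
    exact Relation.ReflTransGen.head
      ⟨Finset.mem_univ _, Finset.mem_univ _, ⟨_, ha, hBe.fst_mem⟩⟩
      (IH Be B' hBe.snd_mem hb)

lemma brel_univ [Fintype (Block G)] (hG : G.Connected) (B B' : Block G) :
    BRel (badj G) Finset.univ B B' := by
  obtain ⟨a, ha⟩ := block_verts_nonempty B
  obtain ⟨b, hb⟩ := block_verts_nonempty B'
  obtain ⟨p⟩ := hG.preconnected a b
  exact brel_univ_aux p B B' ha hb

lemma le_blockUnion {𝓐 : Set (Block G)} {B : Block G} (hB : B ∈ 𝓐) :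
    (B : G.Subgraph) ≤ blockUnion G 𝓐 :=
  le_iSup₂ (f := fun (B : Block G) (_ : B ∈ 𝓐) => (B : G.Subgraph)) B hB

lemma mem_blockUnion_verts {𝓐 : Set (Block G)} {v : V} :
    v ∈ (blockUnion G 𝓐).verts ↔ ∃ B ∈ 𝓐, v ∈ (B : G.Subgraph).verts := by
  rw [blockUnion]
  simp only [SimpleGraph.Subgraph.verts_iSup, Set.mem_iUnion, exists_prop]

lemma reach_aux (S : Finset (Block G)) {B B' : Block G}
    (h : BRel (badj G) S B B') (hB' : B' ∈ S) :
    ∀ (_ : B ∈ S) a, a ∈ (B : G.Subgraph).verts → ∀ b, b ∈ (B' : G.Subgraph).verts →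
      ∀ (pa : a ∈ (blockUnion G ↑S).verts) (pb : b ∈ (blockUnion G ↑S).verts),
      (blockUnion G ↑S).coe.Reachable ⟨a, pa⟩ ⟨b, pb⟩ := by
  induction h using Relation.ReflTransGen.head_induction_on with
  | refl =>
    intro hB a ha b hb pa pb
    have hr := (SimpleGraph.Subgraph.connected_iff.mp (block_connected B')).1 ⟨a, ha⟩ ⟨b, hb⟩
    exact hr.map (SimpleGraph.Subgraph.inclusion (le_blockUnion (Finset.mem_coe.mpr hB')))
  | @head X Y hstep hrel ih =>
    intro hX a ha b hb pa pb
    obtain ⟨c, hcX, hcY⟩ := hstep.2.2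
    have pc : c ∈ (blockUnion G ↑S).verts :=
      (le_blockUnion (Finset.mem_coe.mpr hstep.1)).1 hcX
    have h1 : (blockUnion G ↑S).coe.Reachable ⟨a, pa⟩ ⟨c, pc⟩ :=
      ((SimpleGraph.Subgraph.connected_iff.mp (block_connected X)).1 ⟨a, ha⟩ ⟨c, hcX⟩).map
        (SimpleGraph.Subgraph.inclusion (le_blockUnion (Finset.mem_coe.mpr hstep.1)))
    exact h1.trans (ih hstep.2.1 c hcY b hb pc pb)

lemma bconn_connBlocks (S : Finset (Block G)) (hS : BConn (badj G) S) :
    ConnBlocks G ↑S := by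
  right
  rw [SimpleGraph.Subgraph.connected_iff]
  obtain ⟨⟨B₀, hB₀⟩, hrel⟩ := hS
  constructor
  · rw [SimpleGraph.Subgraph.preconnected_iff]
    rintro ⟨a, ha⟩ ⟨b, hb⟩
    obtain ⟨B₁, hB₁S, ha'⟩ := mem_blockUnion_verts.mp ha
    obtain ⟨B₂, hB₂S, hb'⟩ := mem_blockUnion_verts.mp hb
    have hB₁ : B₁ ∈ S := Finset.mem_coe.mp hB₁S
    have hB₂ : B₂ ∈ S := Finset.mem_coe.mp hB₂S
    exact reach_aux S (hrel B₁ hB₁ B₂ hB₂) hB₂ hB₁ a ha' b hb' ha hb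
  · obtain ⟨a, ha⟩ := block_verts_nonempty B₀
    exact ⟨a, (le_blockUnion (Finset.mem_coe.mpr hB₀)).1 ha⟩

end Graph

/-! #### Closure and validity -/

section Validity

variable {G : SimpleGraph V}

lemma subset_blockClosure {𝓐 : Set (Block G)} : 𝓐 ⊆ blockClosure G 𝓐 :=
  fun B hB => Set.mem_sInter.mpr fun _ h𝓒 => h𝓒.1 hB

lemma blockClosure_subset {𝓐 𝓒 : Set (Block G)} (h1 : 𝓐 ⊆ 𝓒) (h2 : ConnBlocks G 𝓒) :
    blockClosure G 𝓐 ⊆ 𝓒 := Set.sInter_subset_of_mem ⟨h1, h2⟩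

lemma blockClosure_mono {𝓐 𝓑' : Set (Block G)} (h : 𝓐 ⊆ 𝓑') :
    blockClosure G 𝓐 ⊆ blockClosure G 𝓑' := by
  intro B hB
  rw [blockClosure, Set.mem_sInter] at hB ⊢
  intro 𝓒 h𝓒
  exact hB 𝓒 ⟨h.trans h𝓒.1, h𝓒.2⟩

lemma valid_sum {𝓘 : Set (Block G)} {α : Block G → ℤ}
    (h : IsIBI G 𝓘 α) (S : Finset (Block G)) (hS : ConnBlocks G ↑S) :
    ∑ B ∈ S, α B ≤ 1 := by
  classical
  obtain ⟨-, hzero, hone, hneg, -, hsub⟩ := h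
  set I : Set (Block G) := ↑S ∩ 𝓘 with hI
  have hIsub : I ⊆ 𝓘 := Set.inter_subset_right
  have hIS : I ⊆ ↑S := Set.inter_subset_left
  have hclS : blockClosure G I ⊆ ↑S := blockClosure_subset hIS hS
  have hclI : blockClosure G I ⊆ blockClosure G 𝓘 := blockClosure_mono hIsub
  set S1 : Finset (Block G) := S.filter (fun B => B ∈ 𝓘) with hS1
  set S2 : Finset (Block G) :=
    (S.filter (fun B => B ∉ 𝓘)).filter (fun B => B ∈ blockClosure G 𝓘) with hS2
  set S3 : Finset (Block G) :=
    (S.filter (fun B => B ∉ 𝓘)).filter (fun B => B ∉ blockClosure G 𝓘) with hS3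
  have e1 : ∑ B ∈ S1, α B + ∑ B ∈ S.filter (fun B => ¬ B ∈ 𝓘), α B = ∑ B ∈ S, α B :=
    Finset.sum_filter_add_sum_filter_not S (fun B => B ∈ 𝓘) α
  have e2 : ∑ B ∈ S2, α B + ∑ B ∈ S3, α B = ∑ B ∈ S.filter (fun B => ¬ B ∈ 𝓘), α B :=
    Finset.sum_filter_add_sum_filter_not _ (fun B => B ∈ blockClosure G 𝓘) α
  have hsplit : ∑ B ∈ S, α B = ∑ B ∈ S1, α B + (∑ B ∈ S2, α B + ∑ B ∈ S3, α B) := by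
    omega
  have h1 : ∑ B ∈ S1, α B = S1.card := by
    rw [Finset.sum_congr rfl (fun B hB => hone B (Finset.mem_filter.mp hB).2)]
    simp
    rfl
  have h3 : ∑ B ∈ S3, α B = 0 := Finset.sum_eq_zero fun B hB =>
    hzero B (Finset.mem_filter.mp hB).2
  have hfin : (blockClosure G I \ 𝓘).Finite := Set.toFinite _
  have hDsub : hfin.toFinset ⊆ S2 := by
    intro B hB
    rw [Set.Finite.mem_toFinset] at hB
    obtain ⟨hBcl, hBI⟩ := hB
    exact Finset.mem_filter.mpr
      ⟨Finset.mem_filter.mpr ⟨Finset.mem_coe.mp (hclS hBcl), hBI⟩, hclI hBcl⟩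
  have h2 : ∑ B ∈ S2, α B ≤ ∑ B ∈ hfin.toFinset, α B := by
    have hside := Finset.sum_sdiff hDsub (f := α)
    have hnonpos : ∑ B ∈ S2 \ hfin.toFinset, α B ≤ 0 := by
      apply Finset.sum_nonpos
      intro B hB
      obtain ⟨hBS2, -⟩ := Finset.mem_sdiff.mp hB
      obtain ⟨hB1, hBcl⟩ := Finset.mem_filter.mp hBS2
      exact hneg B ⟨hBcl, (Finset.mem_filter.mp hB1).2⟩
    omega
  have h6 := hsub I hIsub
  have hIcard : (I.ncard : ℤ) = S1.card := by
    have hcoe : I = ↑S1 := by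
      ext B
      simp [hI, hS1, Finset.mem_coe, Finset.mem_filter, Set.mem_inter_iff, and_comm]
    rw [hcoe, Set.ncard_coe_finset]
  have hconv : ∑ᶠ B ∈ (blockClosure G I \ 𝓘), α B = ∑ B ∈ hfin.toFinset, α B :=
    finsum_mem_eq_finite_toFinset_sum α hfin
  rw [hconv] at h6
  rw [hIcard] at h6
  omega

lemma i_nonempty {𝓘 : Set (Block G)} {α : Block G → ℤ} (h : IsIBI G 𝓘 α) :
    𝓘.Nonempty := by
  rw [Set.nonempty_iff_ne_empty]
  rintro rfl
  have hcl : blockClosure G (∅ : Set (Block G)) = ∅ :=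
    Set.eq_empty_iff_forall_notMem.mpr fun B hB =>
      (blockClosure_subset (Set.Subset.refl ∅) (Or.inl rfl)) hB
  have hsum := h.2.2.2.2.1
  rw [hcl] at hsum
  simp only [Set.empty_diff, Set.ncard_empty, Nat.cast_zero, zero_sub, neg_neg] at hsum
  rw [finsum_mem_empty] at hsum
  exact absurd hsum (by norm_num)

lemma univ_tight [Fintype (Block G)] {𝓘 : Set (Block G)} {α : Block G → ℤ}
    (h : IsIBI G 𝓘 α) : ∑ B, α B = 1 := by
  classical
  obtain ⟨-, hzero, hone, -, hsum, -⟩ := h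
  set U : Finset (Block G) := Finset.univ with hU
  set S1 : Finset (Block G) := U.filter (fun B => B ∈ 𝓘) with hS1
  set S2 : Finset (Block G) :=
    (U.filter (fun B => B ∉ 𝓘)).filter (fun B => B ∈ blockClosure G 𝓘) with hS2
  set S3 : Finset (Block G) :=
    (U.filter (fun B => B ∉ 𝓘)).filter (fun B => B ∉ blockClosure G 𝓘) with hS3
  have e1 : ∑ B ∈ S1, α B + ∑ B ∈ U.filter (fun B => ¬ B ∈ 𝓘), α B = ∑ B ∈ U, α B :=
    Finset.sum_filter_add_sum_filter_not U (fun B => B ∈ 𝓘) α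
  have e2 : ∑ B ∈ S2, α B + ∑ B ∈ S3, α B = ∑ B ∈ U.filter (fun B => ¬ B ∈ 𝓘), α B :=
    Finset.sum_filter_add_sum_filter_not _ (fun B => B ∈ blockClosure G 𝓘) α
  have hsplit : ∑ B ∈ U, α B = ∑ B ∈ S1, α B + (∑ B ∈ S2, α B + ∑ B ∈ S3, α B) := by
    omega
  have h1 : ∑ B ∈ S1, α B = S1.card := by
    rw [Finset.sum_congr rfl (fun B hB => hone B (Finset.mem_filter.mp hB).2)]
    simp
    rfl
  have h3 : ∑ B ∈ S3, α B = 0 := Finset.sum_eq_zero fun B hB =>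
    hzero B (Finset.mem_filter.mp hB).2
  have hIcard : (𝓘.ncard : ℤ) = S1.card := by
    have hcoe : 𝓘 = ↑S1 := by
      ext B
      simp [hS1, hU, Finset.mem_coe, Finset.mem_filter]
    rw [hcoe, Set.ncard_coe_finset]
  have hfin : (blockClosure G 𝓘 \ 𝓘).Finite := Set.toFinite _
  have hDeq : hfin.toFinset = S2 := by
    ext B
    simp only [Set.Finite.mem_toFinset, Set.mem_diff, hS2, hU, Finset.mem_filter,
      Finset.mem_univ, true_and]
    tauto
  have h2 : ∑ B ∈ S2, α B = -((𝓘.ncard : ℤ) - 1) := by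
    rw [← hDeq, ← finsum_mem_eq_finite_toFinset_sum α hfin]
    exact hsum
  rw [hU] at hsplit
  rw [hsplit, h1, h3, h2, ← hIcard]
  ring

end Validity

end Aux

/-- every independent blocks inequality defines a facet of `CBP(G)`. -/
theorem ibi_facet (G : SimpleGraph V) (hG : G.Connected)
    (𝓘 : Set (Block G)) (α : Block G → ℤ) (h : IsIBI G 𝓘 α) :
    IsFaceOf (CBP G) {x ∈ CBP G | ∑ᶠ B : Block G, (α B : ℝ) * x B = 1} ∧
      polyDim {x ∈ CBP G | ∑ᶠ B : Block G, (α B : ℝ) * x B = 1} =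
        Nat.card (Block G) - 1 := by
  classical
  haveI : Fintype (Block G) := Fintype.ofFinite _
  obtain ⟨B₀, hB₀⟩ := i_nonempty h
  haveI : Nonempty (Block G) := ⟨B₀⟩
  set N := Fintype.card (Block G) with hN
  have hN1 : 1 ≤ N := Fintype.card_pos
  -- the linear functional
  set Lm : (Block G → ℝ) →ₗ[ℝ] ℝ :=
    { toFun := fun x => ∑ B, (α B : ℝ) * x B
      map_add' := fun x y => by
        simp only [Pi.add_apply, mul_add]
        rw [Finset.sum_add_distrib]
      map_smul' := fun c x => by
        simp only [Pi.smul_apply, smul_eq_mul, RingHom.id_apply]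
        rw [Finset.mul_sum]
        exact Finset.sum_congr rfl fun B _ => by ring } with hLm
  have hfinsum : ∀ x : Block G → ℝ, ∑ᶠ B : Block G, (α B : ℝ) * x B = Lm x := fun x =>
    finsum_eq_sum_of_fintype _
  set F := {x ∈ CBP G | ∑ᶠ B : Block G, (α B : ℝ) * x B = 1} with hF
  have hFmem : ∀ x, x ∈ F ↔ x ∈ CBP G ∧ Lm x = 1 := by
    intro x
    rw [hF, Set.mem_setOf_eq, hfinsum x]
  -- value of L on incidence vectors
  have hLm_inc : ∀ T : Finset (Block G), Lm (incVec G ↑T) = ((∑ B ∈ T, α B : ℤ) : ℝ) := by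
    intro T
    show (∑ B, (α B : ℝ) * incVec G ↑T B) = _
    have hterm : ∀ B, (α B : ℝ) * incVec G ↑T B = if B ∈ T then ((α B : ℤ) : ℝ) else 0 := by
      intro B
      by_cases hB : B ∈ T
      · rw [if_pos hB]
        have : incVec G ↑T B = 1 := by
          rw [incVec, Set.indicator_of_mem (Finset.mem_coe.mpr hB)]
          rfl
        rw [this, mul_one]
      · rw [if_neg hB]
        have : incVec G ↑T B = 0 := by
          rw [incVec, Set.indicator_of_notMem (fun hc => hB (Finset.mem_coe.mp hc))]
        rw [this, mul_zero]
    rw [Finset.sum_congr rfl (fun B _ => hterm B), Finset.sum_ite_mem, Finset.univ_inter]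
    push_cast
    rfl
  -- validity on the polytope
  have hvalid_pt : ∀ z ∈ {x | ∃ 𝓐 : Set (Block G), ConnBlocks G 𝓐 ∧ x = incVec G 𝓐},
      z ∈ {x : Block G → ℝ | Lm x ≤ 1} := by
    rintro z ⟨𝓐, h𝓐, rfl⟩
    have hT : (↑((Set.toFinite 𝓐).toFinset) : Set (Block G)) = 𝓐 := Set.Finite.coe_toFinset _
    have h𝓐' : ConnBlocks G ↑((Set.toFinite 𝓐).toFinset) := by rwa [hT]
    have hle := valid_sum h _ h𝓐'
    show Lm (incVec G 𝓐) ≤ 1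
    rw [← hT, hLm_inc]
    exact_mod_cast hle
  have hCBP_le : ∀ z ∈ CBP G, Lm z ≤ 1 := by
    intro z hz
    have hconv : Convex ℝ {x : Block G → ℝ | Lm x ≤ 1} := convex_halfSpace_le Lm.isLinear 1
    exact convexHull_min hvalid_pt hconv hz
  -- the face property
  have hface : IsFaceOf (CBP G) F := by
    refine ⟨fun x hx => ((hFmem x).mp hx).1, ?_, ?_⟩
    · intro x hx y hy a b ha hb hab
      rw [hFmem] at hx hy ⊢
      refine ⟨(convex_convexHull ℝ _) hx.1 hy.1 ha hb hab, ?_⟩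
      rw [map_add, map_smul, map_smul, hx.2, hy.2, smul_eq_mul, smul_eq_mul,
        mul_one, mul_one, hab]
    · intro x hx y hy t ht0 ht1 hmem
      rw [hFmem] at hmem
      have hx1 := hCBP_le x hx
      have hy1 := hCBP_le y hy
      have hsum : t * Lm x + (1 - t) * Lm y = 1 := by
        have := hmem.2
        rwa [map_add, map_smul, map_smul, smul_eq_mul, smul_eq_mul] at this
      have hxx : Lm x = 1 := by nlinarith
      have hyy : Lm y = 1 := by nlinarith
      exact ⟨(hFmem x).mpr ⟨hx, hxx⟩, (hFmem y).mpr ⟨hy, hyy⟩⟩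
  -- upper bound on the dimension
  haveI : FiniteDimensional ℝ (Block G → ℝ) := inferInstance
  have hker : Module.finrank ℝ (LinearMap.ker Lm) = N - 1 := by
    have hsurj : LinearMap.range Lm = ⊤ := by
      rw [LinearMap.range_eq_top]
      intro r
      refine ⟨fun B => if B = B₀ then r else 0, ?_⟩
      show (∑ B, (α B : ℝ) * (if B = B₀ then r else 0)) = r
      rw [Finset.sum_eq_single B₀]
      · rw [if_pos rfl, h.2.2.1 B₀ hB₀]
        norm_num
      · intro b _ hb
        rw [if_neg hb, mul_zero]
      · intro hb
        exact absurd (Finset.mem_univ B₀) hb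
    have hrn := LinearMap.finrank_range_add_finrank_ker Lm
    rw [hsurj, finrank_top] at hrn
    rw [Module.finrank_self] at hrn
    have hNfin : Module.finrank ℝ (Block G → ℝ) = N := Module.finrank_fintype_fun_eq_card ℝ
    omega
  have hupper : polyDim F ≤ N - 1 := by
    show Module.finrank ℝ (affineSpan ℝ F).direction ≤ N - 1
    have hdir : (affineSpan ℝ F).direction ≤ LinearMap.ker Lm := by
      rw [direction_affineSpan, vectorSpan_def, Submodule.span_le]
      rintro z ⟨x, hx, y, hy, rfl⟩
      rw [SetLike.mem_coe, LinearMap.mem_ker]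
      show Lm (x - y) = 0
      rw [map_sub, ((hFmem x).mp hx).2, ((hFmem y).mp hy).2, sub_self]
    calc Module.finrank ℝ (affineSpan ℝ F).direction
        ≤ Module.finrank ℝ (LinearMap.ker Lm) := Submodule.finrank_mono hdir
      _ = N - 1 := hker
  -- lower bound: a triangular family of tight points
  have htopc : BConn (badj G) (Finset.univ : Finset (Block G)) :=
    ⟨Finset.univ_nonempty, fun B _ B' _ => brel_univ hG B B'⟩
  have htopt : ∑ B, α B = 1 := univ_tight h
  have hvalid' : ∀ S : Finset (Block G), BConn (badj G) S → ∑ B ∈ S, α B ≤ 1 :=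
    fun S hS => valid_sum h S (bconn_connBlocks S hS)
  obtain ⟨L, hnd, htf, hall, hpw⟩ :=
    fam (badj_symm G) α hvalid' htopc htopt (Finset.univ : Finset (Block G)).card
      Finset.univ le_rfl
  have hlen : L.length = N := by
    have h1 : (L.map Prod.fst).toFinset.card = N := by
      rw [htf, hN]
      exact Finset.card_univ
    rwa [List.toFinset_card_of_nodup hnd, List.length_map] at h1
  set pts : Fin L.length → (Block G → ℝ) := fun i => incVec G ↑((L.get i).2) with hpts
  have hptsF : ∀ i, pts i ∈ F := by
    intro i
    have hp := hall (L.get i) (L.get_mem i)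
    refine (hFmem _).mpr ⟨?_, ?_⟩
    · exact subset_convexHull ℝ _ ⟨↑(L.get i).2, bconn_connBlocks _ hp.1, rfl⟩
    · rw [hpts]
      show Lm (incVec G ↑((L.get i).2)) = 1
      rw [hLm_inc, hp.2.1]
      norm_num
  have hli : LinearIndependent ℝ pts :=
    triangular_linearIndependent L (fun p hp => (hall p hp).2.2) hpw
  have haff : AffineIndependent ℝ pts := by
    rw [affineIndependent_iff]
    intro s wgt _ hsum
    exact linearIndependent_iff'.mp hli s wgt hsum
  have hcardfin : Fintype.card (Fin L.length) = (N - 1) + 1 := by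
    rw [Fintype.card_fin, hlen]
    omega
  have hlow : N - 1 ≤ polyDim F := by
    have h1 := haff.finrank_vectorSpan hcardfin
    have h2 : vectorSpan ℝ (Set.range pts) ≤ (affineSpan ℝ F).direction := by
      rw [direction_affineSpan]
      exact vectorSpan_mono ℝ (Set.range_subset_iff.mpr hptsF)
    have h3 := Submodule.finrank_mono h2
    rw [h1] at h3
    exact h3
  refine ⟨hface, ?_⟩
  have hdim : polyDim F = N - 1 := le_antisymm hupper hlow
  rw [hdim, Nat.card_eq_fintype_card]

end ConnectedBlocksPaper
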